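/- Let X be a nonempty set, p a partial metric on X, and a a positive real number such that p(x,x) = a for all x ∈ X. Then for any sequence {x_n} in X and any r ≥ 0, the diameter of the rough statistical limit set satisfies diam(st-LIM^r x_n) ≤ 2r + 2a; that is, for all y, z ∈ st-LIM^r x_n one has p(y,z) ≤ 2r + 2a. -/

import Mathlib

/-- A partial metric on a set `X`. -/
structure IsPartialMetric {X : Type*} (p : X → X → ℝ) : Prop where
  nonneg : ∀ x y : X, 0 ≤ p x y
  self_le : ∀ x y : X, p x x ≤ p x y
  eq_iff : ∀ x y : X, x = y ↔ p x x = p x y ∧ p x y = p y y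
  symm : ∀ x y : X, p x y = p y x
  triangle : ∀ x y z : X, p x y ≤ p x z + p z y - p z z

open Classical in
/-- `A ⊆ ℕ` has natural density `d`. -/
def HasNatDensity (A : Set ℕ) (d : ℝ) : Prop :=
  Filter.Tendsto
    (fun n : ℕ => (((Finset.range n).filter (fun k => k ∈ A)).card : ℝ) / (n : ℝ))
    Filter.atTop (nhds d)

/-- `l` is a rough statistical limit point of the sequence `x` with roughness degree `r`,
i.e. `l ∈ st-LIM^r x_n`. -/
def RStatLimit {X : Type*} (p : X → X → ℝ) (x : ℕ → X) (r : ℝ) (l : X) : Prop :=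
  ∀ ε : ℝ, 0 < ε → HasNatDensity {n : ℕ | r + ε ≤ |p (x n) l - p l l|} 0

/-- If all self-distances equal `a > 0`, then `diam (st-LIM^r x_n) ≤ 2r + 2a`. -/
theorem diam_rStatLimit_le
    {X : Type*} [Nonempty X] (p : X → X → ℝ) (hp : IsPartialMetric p)
    (a : ℝ) (ha : 0 < a) (hself : ∀ x : X, p x x = a)
    (x : ℕ → X) (r : ℝ) (hr : 0 ≤ r) :
    ∀ y z : X, RStatLimit p x r y → RStatLimit p x r z → p y z ≤ 2 * r + 2 * a := by
  intro y z hy hz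
  have key : ∀ ε : ℝ, 0 < ε → p y z ≤ (2 * r + a) + ε := by
    intro ε hε
    have hε2 : 0 < ε / 2 := by linarith
    have hAy := hy (ε / 2) hε2
    have hAz := hz (ε / 2) hε2
    have hex : ∃ n, ¬ (r + ε / 2 ≤ |p (x n) y - p y y|) ∧
        ¬ (r + ε / 2 ≤ |p (x n) z - p z z|) := by
      by_contra hcon
      push_neg at hcon
      have hsum := hAy.add hAz
      rw [add_zero] at hsum
      have hev : ∀ᶠ n : ℕ in Filter.atTop, (1 : ℝ) ≤
          (((Finset.range n).filter
              (fun k => k ∈ {m : ℕ | r + ε / 2 ≤ |p (x m) y - p y y|})).card : ℝ) / (n : ℝ) +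
          (((Finset.range n).filter
              (fun k => k ∈ {m : ℕ | r + ε / 2 ≤ |p (x m) z - p z z|})).card : ℝ) / (n : ℝ) := by
        filter_upwards [Filter.eventually_ge_atTop 1] with n hn
        have hnpos : (0 : ℝ) < (n : ℝ) := by exact_mod_cast hn
        rw [← add_div, le_div_iff₀ hnpos, one_mul]
        have hsub : Finset.range n ⊆
            ((Finset.range n).filter
              (fun k => k ∈ {m : ℕ | r + ε / 2 ≤ |p (x m) y - p y y|})) ∪
            ((Finset.range n).filter
              (fun k => k ∈ {m : ℕ | r + ε / 2 ≤ |p (x m) z - p z z|})) := by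
          intro k hk
          rcases le_or_gt (r + ε / 2) |p (x k) y - p y y| with h | h
          · exact Finset.mem_union_left _ (Finset.mem_filter.mpr ⟨hk, h⟩)
          · exact Finset.mem_union_right _
              (Finset.mem_filter.mpr ⟨hk, hcon k h⟩)
        have := (Finset.card_le_card hsub).trans (Finset.card_union_le _ _)
        calc (n : ℝ) = ((Finset.range n).card : ℝ) := by rw [Finset.card_range]
          _ ≤ _ := by exact_mod_cast this
      have := ge_of_tendsto hsum hev
      linarith
    obtain ⟨n, hn1, hn2⟩ := hex
    push_neg at hn1 hn2
    rw [hself y] at hn1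
    rw [hself z] at hn2
    have h1 : p (x n) y ≤ a + r + ε / 2 := by
      have := (abs_lt.mp hn1).2; linarith
    have h2 : p (x n) z ≤ a + r + ε / 2 := by
      have := (abs_lt.mp hn2).2; linarith
    have ht := hp.triangle y z (x n)
    have hsy : p y (x n) = p (x n) y := hp.symm _ _
    rw [hself (x n)] at ht
    linarith
  have h := le_of_forall_pos_le_add key
  linarith
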